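/- Let G be a finite simple graph and let (r, 𝒳) be a description for G. Then the map sending each transversal S of 𝒳 (a set consisting of exactly one vertex from each X ∈ 𝒳) to the connected component of G − S containing r is a bijection between the transversals of 𝒳 and the set of induced trees of G described by (r, 𝒳). In particular, the number of distinct induced trees of G described by (r, 𝒳) equals ∏_{X ∈ 𝒳} |X|. -/

import Mathlib

namespace Secluded

open SimpleGraph

variable {V : Type*}

/-- The open neighborhood of a vertex set `S`: vertices outside `S` with a neighbor in `S`. -/
def openNbhd (G : SimpleGraph V) (S : Set V) : Set V :=
  {v | v ∉ S ∧ ∃ u ∈ S, G.Adj v u}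

/-- The graph obtained from `G` by deleting the vertices in `D`
(kept on the same vertex type; deleted vertices become isolated). -/
def gdelete (G : SimpleGraph V) (D : Set V) : SimpleGraph V where
  Adj x y := G.Adj x y ∧ x ∉ D ∧ y ∉ D
  symm := ⟨fun _ _ h => ⟨h.1.symm, h.2.2, h.2.1⟩⟩
  loopless := ⟨fun x h => G.loopless.irrefl x h.1⟩

/-- `S` induces a tree (connected and acyclic induced subgraph) in `G`. -/
def IsInducedTree (G : SimpleGraph V) (S : Set V) : Prop :=
  (G.induce S).IsTree

/-- `S` is a `k`-secluded tree in `G`. -/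
def IsSecludedTree (G : SimpleGraph V) (k : ℕ) (S : Set V) : Prop :=
  IsInducedTree G S ∧ (openNbhd G S).ncard ≤ k

/-- The set of `k`-secluded supertrees of `F` in `G`. -/
def secl (G : SimpleGraph V) (k : ℕ) (F : Set V) : Set (Set V) :=
  {S | IsSecludedTree G k S ∧ F ⊆ S}

/-- Total weight of a vertex set. -/
noncomputable def weight (w : V → ℕ) (S : Set V) : ℕ := ∑ᶠ x ∈ S, w x

/-- The maximum-weight elements of a collection of vertex sets. -/
def maxset (w : V → ℕ) (X : Set (Set V)) : Set (Set V) :=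
  {S | S ∈ X ∧ ∀ S' ∈ X, weight w S' ≤ weight w S}

/-- `S` consists of exactly one vertex from each member of `𝒳`. -/
def IsTransversal (𝒳 : Set (Set V)) (S : Set V) : Prop :=
  S ⊆ ⋃₀ 𝒳 ∧ ∀ X ∈ 𝒳, (S ∩ X).ncard = 1

/-- The vertex set of the connected component of `G − S` containing `r`. -/
def component (G : SimpleGraph V) (S : Set V) (r : V) : Set V :=
  {x | (gdelete G S).Reachable r x}

/-- `(r, 𝒳)` is a description for `G`. -/
def IsDescription (G : SimpleGraph V) (r : V) (𝒳 : Set (Set V)) : Prop :=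
  (∀ X ∈ 𝒳, r ∉ X) ∧ 𝒳.Pairwise Disjoint ∧
    ∀ S : Set V, IsTransversal 𝒳 S →
      (G.induce (component G S r)).IsAcyclic ∧ openNbhd G (component G S r) = S

/-- The induced tree (given by its vertex set `C`) is described by the description `D`. -/
def Describes (G : SimpleGraph V) (D : V × Set (Set V)) (C : Set V) : Prop :=
  D.1 ∈ C ∧ IsTransversal D.2 (openNbhd G C)

/-- `𝒯_G(𝔛)`: the set of induced trees of `G` described by some member of `𝔛`. -/
def treesOf (G : SimpleGraph V) (𝔛 : Set (V × Set (Set V))) : Set (Set V) :=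
  {C | IsInducedTree G C ∧ ∃ D ∈ 𝔛, Describes G D C}

/-- No induced tree of `G` is described by two distinct members of `𝔛`. -/
def NonRedundant (G : SimpleGraph V) (𝔛 : Set (V × Set (Set V))) : Prop :=
  ∀ C : Set V, IsInducedTree G C → ∀ D₁ ∈ 𝔛, ∀ D₂ ∈ 𝔛,
    Describes G D₁ C → Describes G D₂ C → D₁ = D₂

/-- Degree of a vertex. -/
noncomputable def degOf (G : SimpleGraph V) (v : V) : ℕ := (G.neighborSet v).ncard


section Helpers

variable {V : Type*}

lemma mem_component_self (G : SimpleGraph V) (S : Set V) (r : V) :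
    r ∈ component G S r := Reachable.refl r

lemma reach_in_induce {G : SimpleGraph V} {S : Set V} {r : V} :
    ∀ {a b : V} (_ : (gdelete G S).Walk a b) (ha : a ∈ component G S r)
      (hb : b ∈ component G S r),
      (G.induce (component G S r)).Reachable ⟨a, ha⟩ ⟨b, hb⟩ := by
  intro a b p
  induction p with
  | nil => intro _ _; exact Reachable.refl _
  | @cons u v w h q ih =>
      intro ha hb
      have hv : v ∈ component G S r := ha.trans ⟨SimpleGraph.Walk.cons h SimpleGraph.Walk.nil⟩
      have hadj : (G.induce (component G S r)).Adj ⟨u, ha⟩ ⟨v, hv⟩ := h.1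
      exact hadj.reachable.trans (ih hv hb)

lemma walk_stays {G : SimpleGraph V} {C : Set V} :
    ∀ {a b : V}, (gdelete G (openNbhd G C)).Walk a b → a ∈ C → b ∈ C := by
  intro a b p
  induction p with
  | nil => exact id
  | @cons u v w h _ ih =>
      intro ha
      apply ih
      by_contra hv
      exact h.2.2 ⟨hv, u, ha, h.1.symm⟩

lemma induce_to_gdelete {G : SimpleGraph V} {C : Set V} :
    ∀ {a b : ↥C}, (G.induce C).Walk a b → (gdelete G (openNbhd G C)).Reachable ↑a ↑b := by
  intro a b p
  induction p with
  | nil => exact Reachable.refl _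
  | @cons u v w h _ ih =>
      have hadj : (gdelete G (openNbhd G C)).Adj ↑u ↑v :=
        ⟨h, fun hm => hm.1 u.2, fun hm => hm.1 v.2⟩
      exact hadj.reachable.trans ih

lemma component_openNbhd {G : SimpleGraph V} {C : Set V}
    (hconn : (G.induce C).Connected) {r : V} (hr : r ∈ C) :
    component G (openNbhd G C) r = C := by
  apply Set.Subset.antisymm
  · intro x hx
    obtain ⟨p⟩ := hx
    exact walk_stays p hr
  · intro c hc
    obtain ⟨p⟩ := hconn.preconnected ⟨r, hr⟩ ⟨c, hc⟩
    exact induce_to_gdelete p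

lemma transversal_range {𝒳 : Set (Set V)} (hdisj : 𝒳.Pairwise Disjoint)
    (f : ∀ X : 𝒳, ↥(X : Set V)) (X₀ : 𝒳) :
    Set.range (fun X : 𝒳 => (f X : V)) ∩ (X₀ : Set V) = {(f X₀ : V)} := by
  ext v
  constructor
  · rintro ⟨⟨X, rfl⟩, hv⟩
    by_cases hXX : X = X₀
    · subst hXX; rfl
    · exact absurd hv
        (Set.disjoint_left.mp (hdisj X.2 X₀.2 (fun h => hXX (Subtype.ext h))) (f X).2)
  · rintro rfl
    exact ⟨⟨X₀, rfl⟩, (f X₀).2⟩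

lemma range_transversal {𝒳 : Set (Set V)} (hdisj : 𝒳.Pairwise Disjoint)
    (f : ∀ X : 𝒳, ↥(X : Set V)) :
    IsTransversal 𝒳 (Set.range fun X : 𝒳 => (f X : V)) := by
  constructor
  · rintro v ⟨X, rfl⟩
    exact ⟨X, X.2, (f X).2⟩
  · intro X hX
    rw [show (Set.range fun X : 𝒳 => (f X : V)) ∩ X = {(f ⟨X, hX⟩ : V)} from
      transversal_range hdisj f ⟨X, hX⟩]
    exact Set.ncard_singleton _

lemma ncard_transversals [Fintype V] {𝒳 : Set (Set V)} (hdisj : 𝒳.Pairwise Disjoint) :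
    {S : Set V | IsTransversal 𝒳 S}.ncard = ∏ᶠ X ∈ 𝒳, X.ncard := by
  classical
  haveI : Fintype ↥𝒳 := (Set.toFinite 𝒳).fintype
  set Φ : (∀ X : 𝒳, ↥(X : Set V)) → {S : Set V // IsTransversal 𝒳 S} :=
    fun f => ⟨Set.range fun X : 𝒳 => (f X : V), range_transversal hdisj f⟩ with hΦ
  have hinj : Function.Injective Φ := by
    intro f g h
    have hval : (Set.range fun X : 𝒳 => (f X : V)) = Set.range fun X : 𝒳 => (g X : V) :=
      congrArg Subtype.val h
    funext X
    apply Subtype.ext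
    have h1 := transversal_range hdisj f X
    rw [hval, transversal_range hdisj g X] at h1
    exact (Set.singleton_eq_singleton_iff.mp h1).symm
  have hsurj : Function.Surjective Φ := by
    rintro ⟨S, hS⟩
    choose a ha using fun X : 𝒳 => Set.ncard_eq_one.mp (hS.2 X X.2)
    have hmem : ∀ X : 𝒳, a X ∈ S ∩ (X : Set V) := fun X => (ha X) ▸ rfl
    refine ⟨fun X => ⟨a X, (hmem X).2⟩, ?_⟩
    apply Subtype.ext
    ext v
    simp only [hΦ, Set.mem_range]
    constructor
    · rintro ⟨X, rfl⟩
      exact (hmem X).1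
    · intro hv
      obtain ⟨X, hX, hvX⟩ := hS.1 hv
      refine ⟨⟨X, hX⟩, ?_⟩
      have h2 : v ∈ S ∩ X := ⟨hv, hvX⟩
      rw [ha ⟨X, hX⟩] at h2
      exact h2.symm
  calc {S : Set V | IsTransversal 𝒳 S}.ncard
      = Nat.card {S : Set V // IsTransversal 𝒳 S} :=
        (Nat.card_coe_set_eq _).symm
    _ = Nat.card (∀ X : 𝒳, ↥(X : Set V)) :=
        (Nat.card_congr (Equiv.ofBijective Φ ⟨hinj, hsurj⟩)).symm
    _ = ∏ X : 𝒳, Nat.card ↥(X : Set V) := Nat.card_pi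
    _ = ∏ X : 𝒳, (X : Set V).ncard :=
        Finset.prod_congr rfl fun X _ => Nat.card_coe_set_eq _
    _ = ∏ X ∈ 𝒳.toFinset, X.ncard :=
        (Finset.prod_subtype 𝒳.toFinset (fun x => Set.mem_toFinset) _).symm
    _ = ∏ᶠ X ∈ 𝒳, X.ncard := (finprod_mem_eq_toFinset_prod _ _).symm

end Helpers

/-- for a description `(r, 𝒳)` of `G`, the map sending a transversal `S`
of `𝒳` to the connected component of `G − S` containing `r` is a bijection onto the set
of induced trees of `G` described by `(r, 𝒳)`; in particular the number of described
trees equals `∏_{X ∈ 𝒳} |X|`. -/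
theorem description_counts [Fintype V] (G : SimpleGraph V)
    (r : V) (𝒳 : Set (Set V)) (hd : IsDescription G r 𝒳) :
    Set.BijOn (fun S => component G S r) {S : Set V | IsTransversal 𝒳 S}
        {C : Set V | IsInducedTree G C ∧ Describes G (r, 𝒳) C} ∧
      {C : Set V | IsInducedTree G C ∧ Describes G (r, 𝒳) C}.ncard =
        ∏ᶠ X ∈ 𝒳, X.ncard := by
  obtain ⟨-, hdisj, key⟩ := hd
  have hbij : Set.BijOn (fun S => component G S r) {S : Set V | IsTransversal 𝒳 S}
      {C : Set V | IsInducedTree G C ∧ Describes G (r, 𝒳) C} := by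
    refine ⟨?_, ?_, ?_⟩
    · intro S hS
      have hkey := key S hS
      refine ⟨⟨?_, hkey.1⟩, mem_component_self G S r, ?_⟩
      · refine (SimpleGraph.connected_iff _).mpr ⟨?_, ⟨⟨r, mem_component_self G S r⟩⟩⟩
        rintro ⟨x, hx⟩ ⟨y, hy⟩
        obtain ⟨p⟩ := hx
        obtain ⟨q⟩ := hy
        exact (reach_in_induce p (mem_component_self G S r) ⟨p⟩).symm.trans
          (reach_in_induce q (mem_component_self G S r) ⟨q⟩)
      · show IsTransversal 𝒳 (openNbhd G (component G S r))
        rw [hkey.2]; exact hS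
    · intro S₁ h₁ S₂ h₂ heq
      simp only at heq
      calc S₁ = openNbhd G (component G S₁ r) := (key S₁ h₁).2.symm
        _ = openNbhd G (component G S₂ r) := by rw [heq]
        _ = S₂ := (key S₂ h₂).2
    · rintro C ⟨htree, hrC, htr⟩
      exact ⟨openNbhd G C, htr, component_openNbhd htree.isConnected hrC⟩
  exact ⟨hbij, by rw [← hbij.image_eq, Set.ncard_image_of_injOn hbij.injOn,
    ncard_transversals hdisj]⟩


end Secluded
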